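/- Among all pairs (Â, P) with Â an L×L nonnegative row-wise strictly diagonally dominant matrix and P column-stochastic satisfying ÂP = A for a fixed nonnegative row-wise strictly diagonally dominant matrix A, the pair (A, I) attains the minimum possible value of trace(Â), and any minimizer satisfies Â = A and P = I. -/
import Mathlib


theorem stmt_13 {L : ℕ} (A : Matrix (Fin L) (Fin L) ℝ)
    (hAnn : ∀ i j, 0 ≤ A i j)
    (hADD : ∀ i j, j ≠ i → A i j < A i i) :
    (A * (1 : Matrix (Fin L) (Fin L) ℝ) = A) ∧
    (∀ Ahat P : Matrix (Fin L) (Fin L) ℝ,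
      (∀ i j, 0 ≤ Ahat i j) → (∀ i j, j ≠ i → Ahat i j < Ahat i i) →
      (∀ i j, 0 ≤ P i j) → (∀ i, ∑ j, P j i = 1) →
      Ahat * P = A →
      Matrix.trace A ≤ Matrix.trace Ahat ∧
        (Matrix.trace Ahat = Matrix.trace A → Ahat = A ∧ P = 1)) := by
  refine ⟨Matrix.mul_one A, ?_⟩
  intro Ahat P hnn hdd hPnn hPcol hfac
  have hAdiag : ∀ i, A i i = ∑ k, Ahat i k * P k i := by
    intro i; rw [← hfac, Matrix.mul_apply]
  have hle : ∀ i, ∀ k, Ahat i k * P k i ≤ Ahat i i * P k i := by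
    intro i k
    apply mul_le_mul_of_nonneg_right _ (hPnn k i)
    rcases eq_or_ne k i with h | h
    · simp [h]
    · exact (hdd i k h).le
  have hsumg : ∀ i, ∑ k, Ahat i i * P k i = Ahat i i := by
    intro i; rw [← Finset.mul_sum, hPcol i, mul_one]
  have key : ∀ i, A i i ≤ Ahat i i := by
    intro i
    rw [hAdiag i, ← hsumg i]
    exact Finset.sum_le_sum fun k _ => hle i k
  have htr : Matrix.trace A ≤ Matrix.trace Ahat := by
    simp only [Matrix.trace, Matrix.diag]
    exact Finset.sum_le_sum fun i _ => key i
  refine ⟨htr, fun heq => ?_⟩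
  have hdiag : ∀ i, Ahat i i = A i i := by
    intro i
    by_contra h
    have hlt : A i i < Ahat i i := lt_of_le_of_ne (key i) (Ne.symm h)
    have hs : ∑ j, A j j < ∑ j, Ahat j j :=
      Finset.sum_lt_sum (fun j _ => key j) ⟨i, Finset.mem_univ i, hlt⟩
    have heq' : ∑ j, Ahat j j = ∑ j, A j j := by
      simpa [Matrix.trace, Matrix.diag] using heq
    linarith
  have hoff : ∀ i k, k ≠ i → P k i = 0 := by
    intro i k hk
    have hsum_eq : ∑ k, Ahat i k * P k i = ∑ k, Ahat i i * P k i := by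
      rw [← hAdiag i, hsumg i, hdiag i]
    have hterm := (Finset.sum_eq_sum_iff_of_le
      (fun k (_ : k ∈ Finset.univ) => hle i k)).mp hsum_eq k (Finset.mem_univ k)
    have hfac0 : (Ahat i i - Ahat i k) * P k i = 0 := by
      rw [sub_mul]; linarith [hterm]
    have hpos : 0 < Ahat i i - Ahat i k := sub_pos.mpr (hdd i k hk)
    rcases mul_eq_zero.mp hfac0 with h | h
    · exact absurd h (ne_of_gt hpos)
    · exact h
  have hPeq : P = 1 := by
    ext k i
    rcases eq_or_ne k i with h | h
    · subst h
      have := hPcol k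
      rw [Finset.sum_eq_single k (fun j _ hj => hoff k j hj) (by simp)] at this
      simp [this]
    · simp [Matrix.one_apply_ne h, hoff i k h]
  refine ⟨?_, hPeq⟩
  rw [← Matrix.mul_one Ahat, ← hPeq, hfac]
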